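/- In the quadratic-loss implicit SGD model started exactly at the truth, θ_0 = θ*, the expected first increment of the Pflug statistic built from implicit gradients is E[g_2ᵀg_1] = −γσ² · E[ (x_2ᵀx_1)² / ((1 + γ‖x_1‖²)² (1 + γ‖x_2‖²)) ], which is strictly negative for EVERY learning rate γ > 0 whenever σ² > 0 and P(x_2ᵀx_1 ≠ 0) > 0. -/

import Mathlib

open MeasureTheory Matrix

set_option maxHeartbeats 1000000 in
/-- Quadratic-loss implicit SGD started exactly at the truth
`θ₀ = θ*`, with data `y = xᵀθ* + ε`, `x ~ μx`, `ε ~ με` independent of `x`,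
`E[ε] = 0`, `E[ε²] = σ²`.  The implicit update has closed form
`θ_n = θ_{n-1} + (γ/(1+γ‖x_n‖²))(y_n - x_nᵀθ_{n-1}) x_n` and the implicit
gradient is `g_n = (θ_{n-1} - θ_n)/γ`.  Then
`E[g₂ᵀg₁] = -γ σ² E[(x₂ᵀx₁)² / ((1+γ‖x₁‖²)²(1+γ‖x₂‖²))]`,
which is strictly negative for every learning rate `γ > 0` whenever `σ² > 0`
and `P(x₂ᵀx₁ ≠ 0) > 0`. -/
theorem pflug_first_increment_quadratic_implicit
    (p : ℕ) (μx : Measure (Fin p → ℝ)) (με : Measure ℝ)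
    [IsProbabilityMeasure μx] [IsProbabilityMeasure με]
    (θstar : Fin p → ℝ) (γ σ2 : ℝ) (hγ : 0 < γ)
    (hmean : ∫ e, e ∂με = 0) (hvar : ∫ e, e ^ 2 ∂με = σ2)
    (hεint : Integrable (fun e : ℝ => e ^ 2) με)
    (hxint : Integrable (fun x : Fin p → ℝ => (∑ i, x i ^ 2) ^ 2) μx)
    -- closed-form implicit SGD step at parameter θ with data (x, e)
    (step : (Fin p → ℝ) → (Fin p → ℝ) → ℝ → Fin p → ℝ)
    (hstep : ∀ θ x e, step θ x e
      = θ + (γ / (1 + γ * (x ⬝ᵥ x))) • (((x ⬝ᵥ θstar + e) - x ⬝ᵥ θ) • x))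
    -- E[g₂ᵀ g₁] with θ₀ = θ*, θ₁ = step θ₀, θ₂ = step θ₁, gₙ = (θ_{n-1} - θ_n)/γ
    (ΔS : ℝ)
    (hΔS : ΔS = ∫ x₁, ∫ e₁, ∫ x₂, ∫ e₂,
      (γ⁻¹ • (step θstar x₁ e₁ - step (step θstar x₁ e₁) x₂ e₂))
        ⬝ᵥ (γ⁻¹ • (θstar - step θstar x₁ e₁)) ∂με ∂μx ∂με ∂μx) :
    ΔS = -(γ * σ2) * ∫ x₁, ∫ x₂,
          (x₂ ⬝ᵥ x₁) ^ 2
            / ((1 + γ * (x₁ ⬝ᵥ x₁)) ^ 2 * (1 + γ * (x₂ ⬝ᵥ x₂))) ∂μx ∂μx ∧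
    (0 < σ2 →
      0 < (μx.prod μx) {q : (Fin p → ℝ) × (Fin p → ℝ) | q.2 ⬝ᵥ q.1 ≠ 0} →
      ΔS < 0) := by
  -- notation
  set F : (Fin p → ℝ) → (Fin p → ℝ) → ℝ := fun x₁ x₂ =>
    (x₂ ⬝ᵥ x₁) ^ 2 / ((1 + γ * (x₁ ⬝ᵥ x₁)) ^ 2 * (1 + γ * (x₂ ⬝ᵥ x₂))) with hF
  have hself : ∀ x : Fin p → ℝ, 0 ≤ x ⬝ᵥ x := by
    intro x
    exact Finset.sum_nonneg fun i _ => mul_self_nonneg _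
  have hd : ∀ x : Fin p → ℝ, (0:ℝ) < 1 + γ * (x ⬝ᵥ x) := by
    intro x
    nlinarith [hself x]
  -- integrability of identity on με
  have heid : Integrable (fun e : ℝ => e) με := by
    refine Integrable.mono' (g := fun e => e ^ 2 + 1) (hεint.add (integrable_const 1))
      aestronglyMeasurable_id ?_
    filter_upwards with e
    rw [Real.norm_eq_abs]
    rcases le_or_gt |e| 1 with h | h
    · nlinarith [sq_nonneg e, abs_nonneg e]
    · nlinarith [sq_abs e, abs_nonneg e]
  -- key pointwise identity
  have key : ∀ (x₁ : Fin p → ℝ) (e₁ : ℝ) (x₂ : Fin p → ℝ) (e₂ : ℝ),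
      (γ⁻¹ • (step θstar x₁ e₁ - step (step θstar x₁ e₁) x₂ e₂))
        ⬝ᵥ (γ⁻¹ • (θstar - step θstar x₁ e₁))
      = (γ / (1 + γ * (x₁ ⬝ᵥ x₁)) * (γ / (1 + γ * (x₂ ⬝ᵥ x₂))) * γ⁻¹ * γ⁻¹
          * (x₂ ⬝ᵥ x₁)) * e₁ * e₂
        - ((γ / (1 + γ * (x₁ ⬝ᵥ x₁)))^2 * (γ / (1 + γ * (x₂ ⬝ᵥ x₂))) * γ⁻¹ * γ⁻¹
          * (x₂ ⬝ᵥ x₁)^2) * e₁^2 := by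
    intro x₁ e₁ x₂ e₂
    simp only [hstep, smul_dotProduct, dotProduct_smul, add_dotProduct, dotProduct_add,
      sub_dotProduct, dotProduct_sub, smul_eq_mul, dotProduct_comm x₁ x₂,
      dotProduct_comm θstar x₁, dotProduct_comm θstar x₂]
    ring
  -- pointwise value of -B
  have hBF : ∀ (x₁ x₂ : Fin p → ℝ),
      -(((γ / (1 + γ * (x₁ ⬝ᵥ x₁)))^2 * (γ / (1 + γ * (x₂ ⬝ᵥ x₂))) * γ⁻¹ * γ⁻¹
          * (x₂ ⬝ᵥ x₁)^2)) = -γ * F x₁ x₂ := by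
    intro x₁ x₂
    have h1 := (hd x₁).ne'
    have h2 := (hd x₂).ne'
    rw [hF]
    field_simp
  -- compute the inner triple integral for each x₁
  have hmain : ∀ x₁ : Fin p → ℝ,
      (∫ e₁, ∫ x₂, ∫ e₂,
        (γ⁻¹ • (step θstar x₁ e₁ - step (step θstar x₁ e₁) x₂ e₂))
          ⬝ᵥ (γ⁻¹ • (θstar - step θstar x₁ e₁)) ∂με ∂μx ∂με)
      = -(γ * σ2) * ∫ x₂, F x₁ x₂ ∂μx := by
    intro x₁
    have h1 : ∀ (e₁ : ℝ) (x₂ : Fin p → ℝ),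
        (∫ e₂, (γ⁻¹ • (step θstar x₁ e₁ - step (step θstar x₁ e₁) x₂ e₂))
          ⬝ᵥ (γ⁻¹ • (θstar - step θstar x₁ e₁)) ∂με)
        = (-γ * F x₁ x₂) * e₁ ^ 2 := by
      intro e₁ x₂
      rw [integral_congr_ae (Filter.Eventually.of_forall fun e₂ => key x₁ e₁ x₂ e₂)]
      rw [integral_sub (by simpa using heid.const_mul _) (integrable_const _),
        integral_const_mul, hmean, integral_const]
      simp only [measure_univ, probReal_univ, ENNReal.toReal_one, smul_eq_mul, one_mul, mul_zero, zero_sub]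
      linear_combination e₁ ^ 2 * hBF x₁ x₂
    have h2 : ∀ e₁ : ℝ,
        (∫ x₂, ∫ e₂, (γ⁻¹ • (step θstar x₁ e₁ - step (step θstar x₁ e₁) x₂ e₂))
          ⬝ᵥ (γ⁻¹ • (θstar - step θstar x₁ e₁)) ∂με ∂μx)
        = ((∫ x₂, -γ * F x₁ x₂ ∂μx) * e₁ ^ 2) := by
      intro e₁
      rw [integral_congr_ae (Filter.Eventually.of_forall fun x₂ => h1 e₁ x₂)]
      exact integral_mul_const _ _
    rw [integral_congr_ae (Filter.Eventually.of_forall h2), integral_const_mul, hvar,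
      integral_const_mul]
    ring
  have hΔS' : ΔS = -(γ * σ2) * ∫ x₁, ∫ x₂, F x₁ x₂ ∂μx ∂μx := by
    rw [hΔS, integral_congr_ae (Filter.Eventually.of_forall hmain), integral_const_mul]
  refine ⟨hΔS', fun hσ hP => ?_⟩
  -- positivity of the double integral
  have hcont : Continuous fun q : (Fin p → ℝ) × (Fin p → ℝ) => q.2 ⬝ᵥ q.1 := by
    simp only [dotProduct]
    exact continuous_finset_sum _ fun i _ =>
      ((continuous_apply i).comp continuous_snd).mul ((continuous_apply i).comp continuous_fst)
  have hcont1 : Continuous fun q : (Fin p → ℝ) × (Fin p → ℝ) => q.1 ⬝ᵥ q.1 := by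
    simp only [dotProduct]
    exact continuous_finset_sum _ fun i _ =>
      ((continuous_apply i).comp continuous_fst).mul ((continuous_apply i).comp continuous_fst)
  have hcont2 : Continuous fun q : (Fin p → ℝ) × (Fin p → ℝ) => q.2 ⬝ᵥ q.2 := by
    simp only [dotProduct]
    exact continuous_finset_sum _ fun i _ =>
      ((continuous_apply i).comp continuous_snd).mul ((continuous_apply i).comp continuous_snd)
  have hcontF : Continuous fun q : (Fin p → ℝ) × (Fin p → ℝ) => F q.1 q.2 := by
    rw [hF]
    refine Continuous.div (hcont.pow 2) ?_ fun q => ?_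
    · exact ((continuous_const.add (continuous_const.mul hcont1)).pow 2).mul
        (continuous_const.add (continuous_const.mul hcont2))
    · exact ne_of_gt (mul_pos (pow_pos (hd _) 2) (hd _))
  -- integrability of x ↦ x ⬝ᵥ x
  have hg : Integrable (fun x : Fin p → ℝ => x ⬝ᵥ x) μx := by
    have hgc : Continuous fun x : Fin p → ℝ => x ⬝ᵥ x := by
      simp only [dotProduct]
      exact continuous_finset_sum _ fun i _ => (continuous_apply i).mul (continuous_apply i)
    refine Integrable.mono' (g := fun x => (∑ i, x i ^ 2) ^ 2 + 1)
      (hxint.add (integrable_const 1)) hgc.aestronglyMeasurable ?_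
    filter_upwards with x
    have hx : x ⬝ᵥ x = ∑ i, x i ^ 2 := by simp [dotProduct, sq]
    rw [Real.norm_eq_abs, hx, abs_of_nonneg (by positivity)]
    have hs : (0:ℝ) ≤ ∑ i, x i ^ 2 := by positivity
    nlinarith [sq_nonneg ((∑ i, x i ^ 2) - 1)]
  have hFint : Integrable (fun q : (Fin p → ℝ) × (Fin p → ℝ) => F q.1 q.2) (μx.prod μx) := by
    refine Integrable.mono' (g := fun q => q.1 ⬝ᵥ q.1 * (q.2 ⬝ᵥ q.2))
      (hg.mul_prod hg) hcontF.aestronglyMeasurable ?_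
    filter_upwards with q
    have hnum : (q.2 ⬝ᵥ q.1) ^ 2 ≤ q.1 ⬝ᵥ q.1 * (q.2 ⬝ᵥ q.2) := by
      have := Finset.sum_mul_sq_le_sq_mul_sq Finset.univ (fun i => q.1 i) (fun i => q.2 i)
      simp only [dotProduct]
      calc (∑ i, q.2 i * q.1 i) ^ 2 = (∑ i, q.1 i * q.2 i) ^ 2 := by
            congr 1; exact Finset.sum_congr rfl fun i _ => mul_comm _ _
        _ ≤ (∑ i, q.1 i ^ 2) * ∑ i, q.2 i ^ 2 := this
        _ = (∑ i, q.1 i * q.1 i) * ∑ i, q.2 i * q.2 i := by simp [sq]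
    have hden : (1:ℝ) ≤ (1 + γ * (q.1 ⬝ᵥ q.1)) ^ 2 * (1 + γ * (q.2 ⬝ᵥ q.2)) := by
      have h1 : (1:ℝ) ≤ 1 + γ * (q.1 ⬝ᵥ q.1) := by nlinarith [hself q.1]
      have h2 : (1:ℝ) ≤ 1 + γ * (q.2 ⬝ᵥ q.2) := by nlinarith [hself q.2]
      nlinarith
    have hFq : F q.1 q.2 ≤ (q.2 ⬝ᵥ q.1) ^ 2 := div_le_self (sq_nonneg _) hden
    rw [Real.norm_eq_abs, abs_of_nonneg
      (div_nonneg (sq_nonneg _) (le_of_lt (mul_pos (pow_pos (hd _) 2) (hd _))))]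
    exact hFq.trans hnum
  have hprod : (∫ x₁, ∫ x₂, F x₁ x₂ ∂μx ∂μx)
      = ∫ q, F q.1 q.2 ∂(μx.prod μx) := (integral_prod _ hFint).symm
  have hIpos : 0 < ∫ x₁, ∫ x₂, F x₁ x₂ ∂μx ∂μx := by
    rw [hprod]
    rw [integral_pos_iff_support_of_nonneg (fun q =>
      div_nonneg (sq_nonneg _) (le_of_lt (mul_pos (pow_pos (hd _) 2) (hd _)))) hFint]
    have hsupp : Function.support (fun q : (Fin p → ℝ) × (Fin p → ℝ) => F q.1 q.2)
        = {q : (Fin p → ℝ) × (Fin p → ℝ) | q.2 ⬝ᵥ q.1 ≠ 0} := by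
      ext q
      simp only [Function.mem_support, Set.mem_setOf_eq, hF]
      constructor
      · intro h hq
        exact h (by rw [hq]; simp)
      · intro h
        exact div_ne_zero (pow_ne_zero _ h)
          (ne_of_gt (mul_pos (pow_pos (hd _) 2) (hd _)))
    rw [hsupp]
    exact hP
  rw [hΔS']
  have := mul_pos (mul_pos hγ hσ) hIpos
  linarith
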